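/- The function u(x,y) = y^{4/3} − x^{4/3} on ℝ² is C¹ but not C², and satisfies the infinity Laplace equation Δ_∞ u = ⟨D²u ∇u, ∇u⟩ = 0 pointwise at every point where it is twice differentiable (i.e., where x ≠ 0 and y ≠ 0). -/

import Mathlib

open Set Filter Topology

noncomputable def ggFn : ℝ → ℝ := fun t => (t ^ 2) ^ (2 / 3 : ℝ)
noncomputable def ggFn' : ℝ → ℝ := fun t => (4 / 3) * t * (t ^ 2) ^ (-(1 / 3) : ℝ)
noncomputable def ggFn'' : ℝ → ℝ := fun t => (4 / 9) * (t ^ 2) ^ (-(1 / 3) : ℝ)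

lemma sq_rpow_abs (t q : ℝ) : ((t ^ 2 : ℝ)) ^ q = |t| ^ (2 * q) := by
  rw [← sq_abs, ← Real.rpow_natCast |t| 2, ← Real.rpow_mul (abs_nonneg t)]
  norm_num

lemma hasDerivAt_ggFn (t : ℝ) : HasDerivAt ggFn (ggFn' t) t := by
  rcases eq_or_ne t 0 with rfl | ht
  · have h0 : ggFn' 0 = 0 := by simp [ggFn']
    rw [h0, hasDerivAt_iff_tendsto_slope]
    have hb : Tendsto (fun t : ℝ => |t| ^ (1 / 3 : ℝ)) (𝓝[≠] (0:ℝ)) (𝓝 0) := by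
      have : Tendsto (fun t : ℝ => |t| ^ (1 / 3 : ℝ)) (𝓝 (0:ℝ)) (𝓝 (|(0:ℝ)| ^ (1 / 3 : ℝ))) :=
        (continuous_abs.rpow_const (fun _ => Or.inr (by norm_num))).continuousAt
      simpa [Real.zero_rpow] using this.mono_left nhdsWithin_le_nhds
    refine squeeze_zero_norm' ?_ hb
    filter_upwards [self_mem_nhdsWithin] with t (ht : t ≠ 0)
    have hta : (0:ℝ) < |t| := abs_pos.mpr ht
    have hg : ggFn t = |t| ^ (4 / 3 : ℝ) := by
      rw [ggFn, sq_rpow_abs]; norm_num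
    have : slope ggFn 0 t = ggFn t / t := by
      simp [slope, ggFn, Real.zero_rpow]
      ring
    rw [this, hg]
    rw [norm_div, Real.norm_eq_abs (|t| ^ _), Real.norm_eq_abs,
      abs_of_nonneg (Real.rpow_nonneg (abs_nonneg t) _)]
    rw [show (4/3 : ℝ) = 1/3 + 1 by norm_num, Real.rpow_add hta, Real.rpow_one]
    rw [mul_div_assoc, div_self hta.ne', mul_one]
  · have hs : (0:ℝ) < t ^ 2 := pow_two_pos_of_ne_zero ht
    have h1 : HasDerivAt (fun t : ℝ => t ^ 2) (2 * t) t := by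
      simpa [mul_comm] using hasDerivAt_pow 2 t
    have h2 := h1.rpow_const (p := (2/3 : ℝ)) (Or.inl hs.ne')
    convert h2 using 1
    · rfl
    simp only [ggFn']
    rw [show (2/3 - 1 : ℝ) = -(1/3) by norm_num]
    ring

lemma continuous_ggFn' : Continuous ggFn' := by
  rw [continuous_iff_continuousAt]
  intro t
  rcases eq_or_ne t 0 with rfl | ht
  · have h0 : ggFn' 0 = 0 := by simp [ggFn']
    unfold ContinuousAt
    rw [h0]
    have hb : Tendsto (fun t : ℝ => (4/3) * |t| ^ (1 / 3 : ℝ)) (𝓝 (0:ℝ)) (𝓝 0) := by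
      have : Tendsto (fun t : ℝ => |t| ^ (1 / 3 : ℝ)) (𝓝 (0:ℝ)) (𝓝 (|(0:ℝ)| ^ (1 / 3 : ℝ))) :=
        (continuous_abs.rpow_const (fun _ => Or.inr (by norm_num))).continuousAt
      have := this.const_mul (4/3 : ℝ)
      simpa [Real.zero_rpow] using this
    refine squeeze_zero_norm ?_ hb
    intro t
    rcases eq_or_ne t 0 with rfl | ht
    · simp [ggFn']
    · have hta : (0:ℝ) < |t| := abs_pos.mpr ht
      have : ggFn' t = (4/3) * t * |t| ^ (-(2/3) : ℝ) := by
        rw [ggFn', sq_rpow_abs]; norm_num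
      rw [this, Real.norm_eq_abs, abs_mul, abs_mul]
      rw [abs_of_nonneg (Real.rpow_nonneg (abs_nonneg t) _)]
      rw [show (1/3 : ℝ) = 1 + -(2/3) by norm_num, Real.rpow_add hta, Real.rpow_one]
      rw [abs_of_nonneg (by norm_num : (0:ℝ) ≤ 4/3)]
      ring_nf
      exact le_refl _
  · have hs : (0:ℝ) < t ^ 2 := pow_two_pos_of_ne_zero ht
    have hin : ContinuousAt (fun t : ℝ => t ^ 2) t := (continuous_pow 2).continuousAt
    have hout : ContinuousAt (fun s : ℝ => s ^ (-(1/3) : ℝ)) (t ^ 2) :=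
      Real.continuousAt_rpow_const _ _ (Or.inl hs.ne')
    have hcomp : ContinuousAt (fun t : ℝ => (t ^ 2) ^ (-(1/3) : ℝ)) t :=
      ContinuousAt.comp (f := fun t : ℝ => t ^ 2) hout hin
    exact (continuousAt_const.mul continuousAt_id).mul hcomp

lemma hasDerivAt_ggFn' (t : ℝ) (ht : t ≠ 0) : HasDerivAt ggFn' (ggFn'' t) t := by
  have hs : (0:ℝ) < t ^ 2 := pow_two_pos_of_ne_zero ht
  have h1 : HasDerivAt (fun t : ℝ => t ^ 2) (2 * t) t := by
    simpa [mul_comm] using hasDerivAt_pow 2 t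
  have h2 := h1.rpow_const (p := (-(1/3) : ℝ)) (Or.inl hs.ne')
  have h3 : HasDerivAt (fun t : ℝ => (4/3 : ℝ) * t) (4/3) t := by
    simpa using (hasDerivAt_id t).const_mul (4/3 : ℝ)
  have h4 := h3.mul h2
  convert h4 using 1
  · rfl
  · rfl
  · rfl
  simp only [ggFn'', Function.comp]
  have key : (t^2 : ℝ) ^ ((1:ℝ) + (-(1/3) - 1)) = t^2 * (t^2 : ℝ) ^ ((-(1/3) : ℝ) - 1) := by
    rw [Real.rpow_add hs, Real.rpow_one]
  norm_num at key ⊢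
  linear_combination (-(8/9) : ℝ) * key

lemma ggFn_sq_mul (t : ℝ) (ht : t ≠ 0) : (ggFn' t) ^ 2 * ggFn'' t = 64 / 81 := by
  have hs : (0:ℝ) < t ^ 2 := pow_two_pos_of_ne_zero ht
  have h3 : ((t^2:ℝ) ^ (-(1/3) : ℝ)) * ((t^2:ℝ) ^ (-(1/3) : ℝ)) * ((t^2:ℝ) ^ (-(1/3) : ℝ))
      = (t^2)⁻¹ := by
    rw [← Real.rpow_add hs, ← Real.rpow_add hs]
    norm_num [Real.rpow_neg_one]
  simp only [ggFn', ggFn'']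
  have expand : ((4/3) * t * (t ^ 2) ^ (-(1/3) : ℝ)) ^ 2 * ((4/9) * (t ^ 2) ^ (-(1/3) : ℝ))
      = (64/81) * (t^2 * (((t^2:ℝ) ^ (-(1/3) : ℝ)) * ((t^2:ℝ) ^ (-(1/3) : ℝ)) * ((t^2:ℝ) ^ (-(1/3) : ℝ)))) := by
    ring
  rw [expand, h3, mul_inv_cancel₀ hs.ne', mul_one]

/-- the function `u(x,y) = y^{4/3} − x^{4/3}` (interpreted as
`(y²)^{2/3} − (x²)^{2/3}`) is `C¹` but not `C²` on `ℝ²`, and satisfies the infinity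
Laplace equation `u_x² u_{xx} + 2 u_x u_y u_{xy} + u_y² u_{yy} = 0` at every point
where `x ≠ 0` and `y ≠ 0`. -/
theorem stmt7 (u : ℝ × ℝ → ℝ)
    (hu : ∀ p : ℝ × ℝ, u p = (p.2 ^ 2) ^ (2 / 3 : ℝ) - (p.1 ^ 2) ^ (2 / 3 : ℝ)) :
    ContDiff ℝ 1 u ∧ ¬ ContDiff ℝ 2 u ∧
    ∀ p : ℝ × ℝ, p.1 ≠ 0 → p.2 ≠ 0 →
      (fderiv ℝ u p (1, 0)) ^ 2 * (fderiv ℝ (fun q => fderiv ℝ u q (1, 0)) p (1, 0)) +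
        2 * (fderiv ℝ u p (1, 0)) * (fderiv ℝ u p (0, 1)) *
          (fderiv ℝ (fun q => fderiv ℝ u q (1, 0)) p (0, 1)) +
        (fderiv ℝ u p (0, 1)) ^ 2 * (fderiv ℝ (fun q => fderiv ℝ u q (0, 1)) p (0, 1)) = 0 := by
  have hueq : u = fun p : ℝ × ℝ => ggFn p.2 - ggFn p.1 := by
    funext p; simp [hu p, ggFn]
  have hg1 : ContDiff ℝ 1 ggFn := by
    rw [contDiff_one_iff_deriv]
    constructor
    · exact fun t => (hasDerivAt_ggFn t).differentiableAt
    · have : deriv ggFn = ggFn' := funext fun t => (hasDerivAt_ggFn t).deriv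
      rw [this]; exact continuous_ggFn'
  have hC1 : ContDiff ℝ 1 u := by
    rw [hueq]
    exact (hg1.comp contDiff_snd).sub (hg1.comp contDiff_fst)
  have hU : ∀ p : ℝ × ℝ, HasFDerivAt u
      ((ggFn' p.2) • (ContinuousLinearMap.snd ℝ ℝ ℝ) -
        (ggFn' p.1) • (ContinuousLinearMap.fst ℝ ℝ ℝ)) p := by
    intro p
    have h2 := (hasDerivAt_ggFn p.2).comp_hasFDerivAt p (hasFDerivAt_snd (𝕜 := ℝ) (E := ℝ) (F := ℝ))
    have h1 := (hasDerivAt_ggFn p.1).comp_hasFDerivAt p (hasFDerivAt_fst (𝕜 := ℝ) (E := ℝ) (F := ℝ))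
    have := h2.sub h1
    rw [hueq]
    exact this
  have e1 : ∀ p : ℝ × ℝ, fderiv ℝ u p (1, 0) = -ggFn' p.1 := by
    intro p
    rw [(hU p).fderiv]
    simp
  have e2 : ∀ p : ℝ × ℝ, fderiv ℝ u p (0, 1) = ggFn' p.2 := by
    intro p
    rw [(hU p).fderiv]
    simp
  refine ⟨hC1, ?_, ?_⟩
  · intro h
    have hg2 : ContDiff ℝ 2 ggFn := by
      have hgg : ggFn = fun t : ℝ => u (0, t) := by
        funext t
        simp [hu, ggFn, Real.zero_rpow]
      rw [hgg]
      have hmk : ContDiff ℝ 2 (fun t : ℝ => ((0:ℝ), t)) := ContDiff.prodMk contDiff_const contDiff_id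
      exact h.comp hmk
    have hder : deriv ggFn = ggFn' := funext fun t => (hasDerivAt_ggFn t).deriv
    have hdiff : Differentiable ℝ ggFn' := by
      have h2 : ContDiff ℝ ((1 : ℕ) + 1) ggFn := by exact_mod_cast hg2
      have := (contDiff_succ_iff_deriv.mp h2).2.2
      rw [hder] at this
      exact this.differentiable (by norm_num)
    have hda : HasDerivAt ggFn' (deriv ggFn' 0) 0 := (hdiff 0).hasDerivAt
    rw [hasDerivAt_iff_tendsto_slope] at hda
    have h1 : Tendsto (slope ggFn' 0) (𝓝[>] (0:ℝ)) (𝓝 (deriv ggFn' 0)) :=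
      hda.mono_left (nhdsWithin_mono 0 (fun x hx => ne_of_gt hx))
    have h2 : Tendsto (slope ggFn' 0) (𝓝[>] (0:ℝ)) atTop := by
      have hbase : Tendsto (fun t : ℝ => t ^ (2/3 : ℝ)) (𝓝[>] (0:ℝ)) (𝓝[>] 0) := by
        rw [tendsto_nhdsWithin_iff]
        constructor
        · have : Tendsto (fun t : ℝ => t ^ (2/3 : ℝ)) (𝓝 (0:ℝ)) (𝓝 ((0:ℝ) ^ (2/3 : ℝ))) :=
            (Real.continuousAt_rpow_const 0 (2/3) (Or.inr (by norm_num)))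
          simpa [Real.zero_rpow] using this.mono_left nhdsWithin_le_nhds
        · filter_upwards [self_mem_nhdsWithin] with t (ht : (0:ℝ) < t)
          exact Real.rpow_pos_of_pos ht _
      have hinv : Tendsto (fun t : ℝ => (t ^ (2/3 : ℝ))⁻¹) (𝓝[>] (0:ℝ)) atTop :=
        hbase.inv_tendsto_nhdsGT_zero
      have hconst : Tendsto (fun t : ℝ => (4/3) * (t ^ (2/3 : ℝ))⁻¹) (𝓝[>] (0:ℝ)) atTop :=
        hinv.const_mul_atTop (by norm_num)
      refine hconst.congr' ?_
      filter_upwards [self_mem_nhdsWithin] with t (ht : (0:ℝ) < t)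
      have habs : |t| = t := abs_of_pos ht
      have : slope ggFn' 0 t = ggFn' t / t := by
        simp [slope, ggFn']
        ring
      rw [this, ggFn', sq_rpow_abs, habs]
      rw [show (2 * -(1/3) : ℝ) = -(2/3) by norm_num, Real.rpow_neg ht.le]
      field_simp
    exact not_tendsto_atTop_of_tendsto_nhds h1 h2
  · intro p hx hy
    have fx : (fun q : ℝ × ℝ => fderiv ℝ u q (1, 0)) = fun q => -ggFn' q.1 := funext e1
    have fy : (fun q : ℝ × ℝ => fderiv ℝ u q (0, 1)) = fun q => ggFn' q.2 := funext e2
    have hFx : HasFDerivAt (fun q : ℝ × ℝ => -ggFn' q.1)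
        (-((ggFn'' p.1) • (ContinuousLinearMap.fst ℝ ℝ ℝ))) p :=
      ((hasDerivAt_ggFn' p.1 hx).comp_hasFDerivAt p (hasFDerivAt_fst (𝕜 := ℝ) (E := ℝ) (F := ℝ))).neg
    have hFy : HasFDerivAt (fun q : ℝ × ℝ => ggFn' q.2)
        ((ggFn'' p.2) • (ContinuousLinearMap.snd ℝ ℝ ℝ)) p :=
      (hasDerivAt_ggFn' p.2 hy).comp_hasFDerivAt p (hasFDerivAt_snd (𝕜 := ℝ) (E := ℝ) (F := ℝ))
    rw [fx, fy, hFx.fderiv, hFy.fderiv, e1, e2]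
    simp only [ContinuousLinearMap.neg_apply, ContinuousLinearMap.smul_apply,
      ContinuousLinearMap.coe_fst', ContinuousLinearMap.coe_snd', smul_eq_mul]
    have k1 := ggFn_sq_mul p.1 hx
    have k2 := ggFn_sq_mul p.2 hy
    nlinarith [k1, k2]
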